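/- Let m ≥ 1 and M ≥ 1 be integers. (a) If (x,y) ∈ ℝ^m × ℝ^M is nonzero and satisfies Σ_{i=1}^m x_i² = Σ_{j=1}^M y_j², then x ≠ 0; hence the assignment [x : y] ↦ [x] gives a well-defined map π from Z_{m,M} to the real projective space P^{m−1}(ℝ). (b) The map π is continuous and surjective. (c) For every point p ∈ P^{m−1}(ℝ), the fiber π^{−1}(p) is homeomorphic to the sphere S^{M−1}. -/

import Mathlib

open Metric LinearAlgebra.Projectivization

/-- The quotient topology on a real projectivization. -/
instance projectivizationTopology {V : Type*} [AddCommGroup V] [Module ℝ V]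
    [TopologicalSpace V] : TopologicalSpace (Projectivization ℝ V) :=
  inferInstanceAs (TopologicalSpace (Quotient (projectivizationSetoid ℝ V)))

open scoped RealInnerProductSpace

private lemma Pmk_isQuotientMap {V : Type*} [AddCommGroup V] [Module ℝ V] [TopologicalSpace V] :
    Topology.IsQuotientMap
      (Quotient.mk (projectivizationSetoid ℝ V) : {v : V // v ≠ 0} → ℙ ℝ V) :=
  isQuotientMap_quot_mk

private lemma Pmk_continuous {V : Type*} [AddCommGroup V] [Module ℝ V] [TopologicalSpace V] :
    Continuous (fun v : {v : V // v ≠ 0} => Projectivization.mk ℝ v.1 v.2) :=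
  Pmk_isQuotientMap.continuous

private lemma sat_isOpen {V : Type*} [AddCommGroup V] [Module ℝ V] [TopologicalSpace V]
    (U : Set {v : V // v ≠ 0}) (hU : IsOpen U)
    (hsat : ∀ v w : {v : V // v ≠ 0}, (projectivizationSetoid ℝ V).r v w → (v ∈ U ↔ w ∈ U)) :
    IsOpen {q : ℙ ℝ V | (⟨q.rep, q.rep_nonzero⟩ : {v : V // v ≠ 0}) ∈ U} := by
  set q : {v : V // v ≠ 0} → ℙ ℝ V := Quotient.mk (projectivizationSetoid ℝ V) with hqdef
  have key : q ⁻¹' {q0 : ℙ ℝ V | (⟨q0.rep, q0.rep_nonzero⟩ : {v : V // v ≠ 0}) ∈ U} = U := by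
    ext v
    simp only [Set.mem_preimage, Set.mem_setOf_eq]
    have h1 : Projectivization.mk ℝ (q v).rep (q v).rep_nonzero = q v :=
      Projectivization.mk_rep _
    have h2 : (projectivizationSetoid ℝ V).r ⟨(q v).rep, (q v).rep_nonzero⟩ v :=
      Quotient.exact h1
    exact hsat _ _ h2
  apply Pmk_isQuotientMap.isOpen_preimage.mp
  show IsOpen (q ⁻¹' {q0 : ℙ ℝ V | (⟨q0.rep, q0.rep_nonzero⟩ : {v : V // v ≠ 0}) ∈ U})
  rw [key]
  exact hU

private lemma sat_continuous {V A X : Type*} [AddCommGroup V] [Module ℝ V] [TopologicalSpace V]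
    [TopologicalSpace A] [TopologicalSpace X]
    (j : A → ℙ ℝ V) (hj : Continuous j) (g : A → X)
    (h : ∀ O : Set X, IsOpen O → ∃ U : Set {v : V // v ≠ 0}, IsOpen U ∧
      (∀ v w : {v : V // v ≠ 0}, (projectivizationSetoid ℝ V).r v w → (v ∈ U ↔ w ∈ U)) ∧
      ∀ a, (g a ∈ O ↔ (⟨(j a).rep, (j a).rep_nonzero⟩ : {v : V // v ≠ 0}) ∈ U)) :
    Continuous g := by
  rw [continuous_def]
  intro O hO
  obtain ⟨U, hU, hsat, hiff⟩ := h O hO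
  have : g ⁻¹' O = j ⁻¹' {q : ℙ ℝ V | (⟨q.rep, q.rep_nonzero⟩ : {v : V // v ≠ 0}) ∈ U} := by
    ext a; exact hiff a
  rw [this]
  exact (sat_isOpen U hU hsat).preimage hj

private lemma sumsq_eq {n : ℕ} (x : EuclideanSpace ℝ (Fin n)) : ∑ i, x i ^ 2 = ‖x‖ ^ 2 := by
  rw [EuclideanSpace.norm_eq, Real.sq_sqrt (by positivity)]
  congr 1; ext i; rw [Real.norm_eq_abs, sq_abs]

private lemma sumsq_smul {n : ℕ} (a : ℝ) (x : EuclideanSpace ℝ (Fin n)) :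
    ∑ i, (a • x) i ^ 2 = a ^ 2 * ∑ i, x i ^ 2 := by
  rw [Finset.mul_sum]
  congr 1; ext i
  simp [mul_pow]

private lemma memZ_iff {m M : ℕ} (v : EuclideanSpace ℝ (Fin m) × EuclideanSpace ℝ (Fin M))
    (hv : v ≠ 0) :
    (∑ i, (Projectivization.mk ℝ v hv).rep.1 i ^ 2
      = ∑ j, (Projectivization.mk ℝ v hv).rep.2 j ^ 2)
    ↔ ∑ i, v.1 i ^ 2 = ∑ j, v.2 j ^ 2 := by
  obtain ⟨a, ha⟩ := Projectivization.exists_smul_eq_mk_rep ℝ v hv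
  rw [Units.smul_def] at ha
  have h1 : (Projectivization.mk ℝ v hv).rep.1 = (a : ℝ) • v.1 := by
    rw [← ha, Prod.smul_fst]
  have h2 : (Projectivization.mk ℝ v hv).rep.2 = (a : ℝ) • v.2 := by
    rw [← ha, Prod.smul_snd]
  simp only [h1, h2, sumsq_smul]
  constructor
  · intro h
    exact mul_left_cancel₀ (pow_ne_zero 2 a.ne_zero) h
  · intro h; rw [h]

private lemma fiber_homeo {m M : ℕ}
    (S : Set (ℙ ℝ (EuclideanSpace ℝ (Fin m) × EuclideanSpace ℝ (Fin M))))
    (hS : ∀ q : ℙ ℝ (EuclideanSpace ℝ (Fin m) × EuclideanSpace ℝ (Fin M)),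
      q ∈ S ↔ ∑ i, q.rep.1 i ^ 2 = ∑ j, q.rep.2 j ^ 2)
    (h1 : ∀ q : S, q.1.rep.1 ≠ 0)
    (π : S → ℙ ℝ (EuclideanSpace ℝ (Fin m)))
    (hπ : ∀ q : S, π q = Projectivization.mk ℝ q.1.rep.1 (h1 q))
    (p : ℙ ℝ (EuclideanSpace ℝ (Fin m))) :
    Nonempty ((π ⁻¹' {p}) ≃ₜ Metric.sphere (0 : EuclideanSpace ℝ (Fin M)) 1) := by
  classical
  have hr0 : ‖p.rep‖ ≠ 0 := norm_ne_zero_iff.mpr p.rep_nonzero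
  set u : EuclideanSpace ℝ (Fin m) := ‖p.rep‖⁻¹ • p.rep with hudef
  have hu : ‖u‖ = 1 := by
    rw [hudef, norm_smul, norm_inv, norm_norm, inv_mul_cancel₀ hr0]
  have hu0 : u ≠ 0 := fun h => by rw [h, norm_zero] at hu; exact one_ne_zero hu.symm
  have hup : Projectivization.mk ℝ u hu0 = p := by
    have h2 : Projectivization.mk ℝ u hu0 = Projectivization.mk ℝ p.rep p.rep_nonzero :=
      (Projectivization.mk_eq_mk_iff ℝ _ _ hu0 p.rep_nonzero).2
        ⟨Units.mk0 ‖p.rep‖⁻¹ (inv_ne_zero hr0), by rw [Units.smul_def]; rfl⟩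
    rw [h2, Projectivization.mk_rep]
  have husq : ∑ i, u i ^ 2 = 1 := by rw [sumsq_eq, hu, one_pow]
  have huu : ⟪u, u⟫ = 1 := by rw [real_inner_self_eq_norm_sq, hu, one_pow]
  -- forward map data
  have hy0 : ∀ y : Metric.sphere (0 : EuclideanSpace ℝ (Fin M)) 1,
      ((u, (y : EuclideanSpace ℝ (Fin M))) :
        EuclideanSpace ℝ (Fin m) × EuclideanSpace ℝ (Fin M)) ≠ 0 :=
    fun y h => hu0 (congrArg Prod.fst h)
  have hynorm : ∀ y : Metric.sphere (0 : EuclideanSpace ℝ (Fin M)) 1,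
      ‖(y : EuclideanSpace ℝ (Fin M))‖ = 1 := fun y => mem_sphere_zero_iff_norm.mp y.2
  have hZ1 : ∀ y : Metric.sphere (0 : EuclideanSpace ℝ (Fin M)) 1,
      Projectivization.mk ℝ (u, (y : EuclideanSpace ℝ (Fin M))) (hy0 y) ∈ S := by
    intro y
    rw [hS, memZ_iff]
    show ∑ i, u i ^ 2 = ∑ j, (y : EuclideanSpace ℝ (Fin M)) j ^ 2
    rw [husq, sumsq_eq, hynorm, one_pow]
  have hπy : ∀ y : Metric.sphere (0 : EuclideanSpace ℝ (Fin M)) 1,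
      π ⟨Projectivization.mk ℝ (u, (y : EuclideanSpace ℝ (Fin M))) (hy0 y), hZ1 y⟩ = p := by
    intro y
    rw [hπ]
    obtain ⟨a, ha⟩ := Projectivization.exists_smul_eq_mk_rep ℝ
      (u, (y : EuclideanSpace ℝ (Fin M))) (hy0 y)
    rw [Units.smul_def] at ha
    have h1' : (Projectivization.mk ℝ (u, (y : EuclideanSpace ℝ (Fin M))) (hy0 y)).rep.1
        = (a : ℝ) • u := by rw [← ha, Prod.smul_fst]
    rw [← hup]
    exact (Projectivization.mk_eq_mk_iff ℝ _ _ _ _).2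
      ⟨a, by rw [Units.smul_def]; exact h1'.symm⟩
  -- inverse map data
  have hbex : ∀ a : ↥(π ⁻¹' {p}), ∃ b : ℝˣ, (b : ℝ) • u = a.1.1.rep.1 := by
    intro a
    have h2 : π a.1 = p := a.2
    have h3 : Projectivization.mk ℝ a.1.1.rep.1 (h1 a.1) = Projectivization.mk ℝ u hu0 :=
      ((hπ a.1).symm.trans h2).trans hup.symm
    obtain ⟨b, hb⟩ := (Projectivization.mk_eq_mk_iff ℝ _ _ _ _).1 h3
    exact ⟨b, by rw [← Units.smul_def]; exact hb⟩
  have hc : ∀ (a : ↥(π ⁻¹' {p})) (b : ℝˣ), (b : ℝ) • u = a.1.1.rep.1 →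
      ⟪u, a.1.1.rep.1⟫ = (b : ℝ) := by
    intro a b hb1
    rw [← hb1, real_inner_smul_right, huu, mul_one]
  have hnorm2 : ∀ (a : ↥(π ⁻¹' {p})) (b : ℝˣ), (b : ℝ) • u = a.1.1.rep.1 →
      ‖a.1.1.rep.2‖ = |(b : ℝ)| := by
    intro a b hb1
    have hSa : ∑ i, a.1.1.rep.1 i ^ 2 = ∑ j, a.1.1.rep.2 j ^ 2 := (hS a.1.1).1 a.1.2
    have h2 : ∑ i, a.1.1.rep.1 i ^ 2 = (b : ℝ) ^ 2 := by
      rw [← hb1, sumsq_smul, husq, mul_one]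
    have h3 : ‖a.1.1.rep.2‖ ^ 2 = (b : ℝ) ^ 2 := by rw [← sumsq_eq, ← hSa, h2]
    have h4 := congrArg Real.sqrt h3
    rwa [Real.sqrt_sq (norm_nonneg _), Real.sqrt_sq_eq_abs] at h4
  have hsphere : ∀ a : ↥(π ⁻¹' {p}),
      (⟪u, a.1.1.rep.1⟫)⁻¹ • a.1.1.rep.2 ∈
        Metric.sphere (0 : EuclideanSpace ℝ (Fin M)) 1 := by
    intro a
    obtain ⟨b, hb1⟩ := hbex a
    rw [mem_sphere_zero_iff_norm, hc a b hb1, norm_smul, norm_inv, Real.norm_eq_abs,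
      hnorm2 a b hb1]
    exact inv_mul_cancel₀ (abs_ne_zero.mpr b.ne_zero)
  let toF : Metric.sphere (0 : EuclideanSpace ℝ (Fin M)) 1 → ↥(π ⁻¹' {p}) := fun y =>
    ⟨⟨Projectivization.mk ℝ (u, (y : EuclideanSpace ℝ (Fin M))) (hy0 y), hZ1 y⟩, hπy y⟩
  let invF : ↥(π ⁻¹' {p}) → Metric.sphere (0 : EuclideanSpace ℝ (Fin M)) 1 := fun a =>
    ⟨(⟪u, a.1.1.rep.1⟫)⁻¹ • a.1.1.rep.2, hsphere a⟩
  refine ⟨⟨⟨invF, toF, ?_, ?_⟩, ?_, ?_⟩⟩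
  · -- right inverse
    intro a
    apply Subtype.ext
    apply Subtype.ext
    obtain ⟨b, hb1⟩ := hbex a
    show Projectivization.mk ℝ
      (u, (⟪u, a.1.1.rep.1⟫)⁻¹ • a.1.1.rep.2) _ = a.1.1
    have hw : (b⁻¹ : ℝˣ) • a.1.1.rep =
        ((u, (⟪u, a.1.1.rep.1⟫)⁻¹ • a.1.1.rep.2) :
          EuclideanSpace ℝ (Fin m) × EuclideanSpace ℝ (Fin M)) := by
      rw [Units.smul_def, Units.val_inv_eq_inv_val]
      apply Prod.ext
      · rw [Prod.smul_fst, ← hb1, inv_smul_smul₀ b.ne_zero]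
      · rw [Prod.smul_snd, hc a b hb1]
    have e1 : Projectivization.mk ℝ
        ((u, (⟪u, a.1.1.rep.1⟫)⁻¹ • a.1.1.rep.2) :
          EuclideanSpace ℝ (Fin m) × EuclideanSpace ℝ (Fin M))
        (fun h => hu0 (congrArg Prod.fst h))
        = Projectivization.mk ℝ a.1.1.rep a.1.1.rep_nonzero :=
      (Projectivization.mk_eq_mk_iff ℝ _ _ _ _).2 ⟨b⁻¹, hw⟩
    exact e1.trans (Projectivization.mk_rep _)
  · -- left inverse
    intro y
    apply Subtype.ext
    show (⟪u, (toF y).1.1.rep.1⟫)⁻¹ • (toF y).1.1.rep.2 = (y : EuclideanSpace ℝ (Fin M))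
    obtain ⟨a, ha⟩ := Projectivization.exists_smul_eq_mk_rep ℝ
      (u, (y : EuclideanSpace ℝ (Fin M))) (hy0 y)
    rw [Units.smul_def] at ha
    have h1' : (toF y).1.1.rep.1 = (a : ℝ) • u := by
      show (Projectivization.mk ℝ _ (hy0 y)).rep.1 = _
      rw [← ha, Prod.smul_fst]
    have h2' : (toF y).1.1.rep.2 = (a : ℝ) • (y : EuclideanSpace ℝ (Fin M)) := by
      show (Projectivization.mk ℝ _ (hy0 y)).rep.2 = _
      rw [← ha, Prod.smul_snd]
    rw [hc (toF y) a (by rw [h1']), h2', inv_smul_smul₀ a.ne_zero]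
  · -- continuity of invF
    apply sat_continuous (fun a : ↥(π ⁻¹' {p}) => a.1.1)
      (continuous_subtype_val.comp continuous_subtype_val)
    intro O hO
    obtain ⟨O', hO'open, hO'⟩ := isOpen_induced_iff.mp hO
    have cInner : Continuous (fun v :
        {v : EuclideanSpace ℝ (Fin m) × EuclideanSpace ℝ (Fin M) // v ≠ 0} =>
        ⟪u, v.1.1⟫) :=
      Continuous.inner continuous_const (continuous_fst.comp continuous_subtype_val)
    have hAopen : IsOpen {v : {v : EuclideanSpace ℝ (Fin m) × EuclideanSpace ℝ (Fin M) // v ≠ 0} |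
        ⟪u, v.1.1⟫ ≠ 0} := isOpen_ne.preimage cInner
    refine ⟨{v | ⟪u, v.1.1⟫ ≠ 0} ∩
      ((fun v : {v : EuclideanSpace ℝ (Fin m) × EuclideanSpace ℝ (Fin M) // v ≠ 0} =>
        (⟪u, v.1.1⟫)⁻¹ • v.1.2) ⁻¹' O'), ?_, ?_, ?_⟩
    · apply ContinuousOn.isOpen_inter_preimage ?_ hAopen hO'open
      exact ((cInner.continuousOn.inv₀ (fun v hv => hv)).smul
        ((continuous_snd.comp continuous_subtype_val).continuousOn))
    · intro v w hr
      obtain ⟨a, ha⟩ := hr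
      have ha' : (a : ℝ) • (w : EuclideanSpace ℝ (Fin m) × EuclideanSpace ℝ (Fin M)) = v := by
        rw [← Units.smul_def]; exact ha
      have h1' : (v : EuclideanSpace ℝ (Fin m) × EuclideanSpace ℝ (Fin M)).1
          = (a : ℝ) • (w : EuclideanSpace ℝ (Fin m) × EuclideanSpace ℝ (Fin M)).1 := by
        rw [← ha', Prod.smul_fst]
      have h2' : (v : EuclideanSpace ℝ (Fin m) × EuclideanSpace ℝ (Fin M)).2
          = (a : ℝ) • (w : EuclideanSpace ℝ (Fin m) × EuclideanSpace ℝ (Fin M)).2 := by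
        rw [← ha', Prod.smul_snd]
      simp only [Set.mem_inter_iff, Set.mem_setOf_eq, Set.mem_preimage]
      by_cases hd : ⟪u, (w : EuclideanSpace ℝ (Fin m) × EuclideanSpace ℝ (Fin M)).1⟫ = 0
      · rw [h1', real_inner_smul_right, hd, mul_zero]
        simp
      · have hvinner : ⟪u, (v : EuclideanSpace ℝ (Fin m) × EuclideanSpace ℝ (Fin M)).1⟫
            = (a : ℝ) * ⟪u, (w : EuclideanSpace ℝ (Fin m) × EuclideanSpace ℝ (Fin M)).1⟫ := by
          rw [h1', real_inner_smul_right]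
        have hkey : (⟪u, (v : EuclideanSpace ℝ (Fin m) × EuclideanSpace ℝ (Fin M)).1⟫)⁻¹ •
            (v : EuclideanSpace ℝ (Fin m) × EuclideanSpace ℝ (Fin M)).2
            = (⟪u, (w : EuclideanSpace ℝ (Fin m) × EuclideanSpace ℝ (Fin M)).1⟫)⁻¹ •
            (w : EuclideanSpace ℝ (Fin m) × EuclideanSpace ℝ (Fin M)).2 := by
          rw [hvinner, h2', smul_smul]
          congr 1
          rw [mul_inv, mul_right_comm, inv_mul_cancel₀ a.ne_zero, one_mul]
        rw [hkey, hvinner]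
        simp [a.ne_zero, hd]
    · intro a
      obtain ⟨b, hb1⟩ := hbex a
      have hcne : ⟪u, a.1.1.rep.1⟫ ≠ 0 := by
        rw [hc a b hb1]; exact b.ne_zero
      constructor
      · intro h
        refine ⟨hcne, ?_⟩
        rw [← hO'] at h
        exact h
      · intro h
        rw [← hO']
        exact h.2
  · -- continuity of toF
    have cont1 : Continuous (fun y : Metric.sphere (0 : EuclideanSpace ℝ (Fin M)) 1 =>
        Projectivization.mk ℝ (u, (y : EuclideanSpace ℝ (Fin M))) (hy0 y)) := by
      have hrw : (fun y : Metric.sphere (0 : EuclideanSpace ℝ (Fin M)) 1 =>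
          Projectivization.mk ℝ (u, (y : EuclideanSpace ℝ (Fin M))) (hy0 y)) =
          (fun v : {v : EuclideanSpace ℝ (Fin m) × EuclideanSpace ℝ (Fin M) // v ≠ 0} =>
            Projectivization.mk ℝ v.1 v.2) ∘
          (fun y : Metric.sphere (0 : EuclideanSpace ℝ (Fin M)) 1 =>
            ⟨(u, (y : EuclideanSpace ℝ (Fin M))), hy0 y⟩) := rfl
      rw [hrw]
      exact Pmk_continuous.comp
        ((continuous_const.prodMk continuous_subtype_val).subtype_mk _)
    exact (cont1.subtype_mk _).subtype_mk _

/-- (a) A nonzero solution `(x,y)` of `Σ xᵢ² = Σ yⱼ²` has `x ≠ 0`, so `[x : y] ↦ [x]` gives a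
well-defined map `π` from the projective quadric `Z_{m,M}` to `ℙ^{m−1}(ℝ)`; (b) `π` is
continuous and surjective; (c) every fiber of `π` is homeomorphic to the sphere `S^{M−1}`. -/
theorem Z_sphere_fibration (m M : ℕ) (hm : 1 ≤ m) (hM : 1 ≤ M) :
    (∀ (x : EuclideanSpace ℝ (Fin m)) (y : EuclideanSpace ℝ (Fin M)),
      (x, y) ≠ (0 : EuclideanSpace ℝ (Fin m) × EuclideanSpace ℝ (Fin M)) →
      ∑ i, x i ^ 2 = ∑ j, y j ^ 2 → x ≠ 0) ∧
    ∃ π : {p : ℙ ℝ (EuclideanSpace ℝ (Fin m) × EuclideanSpace ℝ (Fin M)) |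
            ∑ i, p.rep.1 i ^ 2 = ∑ j, p.rep.2 j ^ 2} → ℙ ℝ (EuclideanSpace ℝ (Fin m)),
      (∀ (x : EuclideanSpace ℝ (Fin m)) (y : EuclideanSpace ℝ (Fin M))
        (h0 : (x, y) ≠ (0 : EuclideanSpace ℝ (Fin m) × EuclideanSpace ℝ (Fin M)))
        (hx : x ≠ 0)
        (hZ : Projectivization.mk ℝ (x, y) h0 ∈
          {p : ℙ ℝ (EuclideanSpace ℝ (Fin m) × EuclideanSpace ℝ (Fin M)) |
            ∑ i, p.rep.1 i ^ 2 = ∑ j, p.rep.2 j ^ 2}),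
        π ⟨Projectivization.mk ℝ (x, y) h0, hZ⟩ = Projectivization.mk ℝ x hx) ∧
      Continuous π ∧ Function.Surjective π ∧
      ∀ p : ℙ ℝ (EuclideanSpace ℝ (Fin m)),
        Nonempty ((π ⁻¹' {p}) ≃ₜ sphere (0 : EuclideanSpace ℝ (Fin M)) 1) := by
  classical
  -- part (a)
  have parta : ∀ (x : EuclideanSpace ℝ (Fin m)) (y : EuclideanSpace ℝ (Fin M)),
      (x, y) ≠ 0 → ∑ i, x i ^ 2 = ∑ j, y j ^ 2 → x ≠ 0 := by
    intro x y h0 heq hx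
    apply h0
    have hx2 : ∑ i, x i ^ 2 = 0 := by rw [hx]; simp [EuclideanSpace]
    have hy : y = 0 := by
      have h2 : ‖y‖ ^ 2 = 0 := by rw [← sumsq_eq, ← heq, hx2]
      have := pow_eq_zero_iff (n := 2) (by norm_num) |>.mp h2
      exact norm_eq_zero.mp this
    rw [hx, hy]; rfl
  refine ⟨parta, ?_⟩
  -- membership transfer
  have hmemZ : ∀ (v : EuclideanSpace ℝ (Fin m) × EuclideanSpace ℝ (Fin M)) (hv : v ≠ 0),
      (Projectivization.mk ℝ v hv ∈
        {p : ℙ ℝ (EuclideanSpace ℝ (Fin m) × EuclideanSpace ℝ (Fin M)) |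
          ∑ i, p.rep.1 i ^ 2 = ∑ j, p.rep.2 j ^ 2}
        ↔ ∑ i, v.1 i ^ 2 = ∑ j, v.2 j ^ 2) := by
    intro v hv
    obtain ⟨a, ha⟩ := Projectivization.exists_smul_eq_mk_rep ℝ v hv
    rw [Units.smul_def] at ha
    have h1 : (Projectivization.mk ℝ v hv).rep.1 = (a : ℝ) • v.1 := by
      rw [← ha, Prod.smul_fst]
    have h2 : (Projectivization.mk ℝ v hv).rep.2 = (a : ℝ) • v.2 := by
      rw [← ha, Prod.smul_snd]
    simp only [Set.mem_setOf_eq, h1, h2, sumsq_smul]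
    constructor
    · intro h
      exact mul_left_cancel₀ (pow_ne_zero 2 a.ne_zero) h
    · intro h; rw [h]
  -- the map π
  have hrep1 : ∀ p : {p : ℙ ℝ (EuclideanSpace ℝ (Fin m) × EuclideanSpace ℝ (Fin M)) |
      ∑ i, p.rep.1 i ^ 2 = ∑ j, p.rep.2 j ^ 2}, p.1.rep.1 ≠ 0 := by
    intro p
    exact parta _ _ (by rw [Prod.mk.eta]; exact p.1.rep_nonzero) p.2
  refine ⟨fun p => Projectivization.mk ℝ p.1.rep.1 (hrep1 p), ?_, ?_, ?_, ?_⟩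
  · -- specification
    intro x y h0 hx hZ
    obtain ⟨a, ha⟩ := Projectivization.exists_smul_eq_mk_rep ℝ (x, y) h0
    rw [Units.smul_def] at ha
    apply (Projectivization.mk_eq_mk_iff ℝ _ _ _ hx).2
    refine ⟨a, ?_⟩
    rw [Units.smul_def]
    have : (Projectivization.mk ℝ (x, y) h0).rep.1 = (a : ℝ) • x := by
      rw [← ha, Prod.smul_fst]
    exact this.symm
  · -- continuity
    apply sat_continuous Subtype.val continuous_subtype_val
    intro O hO
    have hOpre : IsOpen ((fun v : {x : EuclideanSpace ℝ (Fin m) // x ≠ 0} =>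
        Projectivization.mk ℝ v.1 v.2) ⁻¹' O) := hO.preimage Pmk_continuous
    obtain ⟨O₂, hO₂open, hO₂⟩ := isOpen_induced_iff.mp hOpre
    have hchar : ∀ (x : EuclideanSpace ℝ (Fin m)) (hx : x ≠ 0),
        x ∈ O₂ ↔ Projectivization.mk ℝ x hx ∈ O := by
      intro x hx
      have := Set.ext_iff.mp hO₂ ⟨x, hx⟩
      simpa using this
    refine ⟨{v | v.1.1 ≠ 0 ∧ v.1.1 ∈ O₂}, ?_, ?_, ?_⟩
    · have hrw : {v : {v : EuclideanSpace ℝ (Fin m) × EuclideanSpace ℝ (Fin M) // v ≠ 0} |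
          v.1.1 ≠ 0 ∧ v.1.1 ∈ O₂} =
          (fun v : {v : EuclideanSpace ℝ (Fin m) × EuclideanSpace ℝ (Fin M) // v ≠ 0} =>
            v.1.1) ⁻¹' ({x | x ≠ 0} ∩ O₂) := rfl
      rw [hrw]
      exact (isOpen_ne.inter hO₂open).preimage (continuous_fst.comp continuous_subtype_val)
    · intro v w hr
      obtain ⟨a, ha⟩ := hr
      have ha' : (a : ℝ) • (w : EuclideanSpace ℝ (Fin m) × EuclideanSpace ℝ (Fin M)) = v := by
        rw [← Units.smul_def]; exact ha
      have h1 : v.1.1 = (a : ℝ) • w.1.1 := by rw [← ha', Prod.smul_fst]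
      simp only [Set.mem_setOf_eq]
      by_cases hw : w.1.1 = 0
      · have hv0 : v.1.1 = 0 := by rw [h1, hw, smul_zero]
        simp [hv0, hw]
      · have hv : v.1.1 ≠ 0 := by
          rw [h1]; exact smul_ne_zero a.ne_zero hw
        have hmk : Projectivization.mk ℝ v.1.1 hv = Projectivization.mk ℝ w.1.1 hw :=
          (Projectivization.mk_eq_mk_iff ℝ _ _ hv hw).2
            ⟨a, by rw [Units.smul_def]; exact h1.symm⟩
        simp only [hv, hw, ne_eq, not_false_iff, true_and]
        rw [hchar _ hv, hchar _ hw, hmk]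
    · intro a
      simp only [Set.mem_setOf_eq]
      have hv := hrep1 a
      rw [hchar _ hv]
      exact ⟨fun h => ⟨hv, h⟩, fun h => h.2⟩
  · -- surjectivity
    intro p
    set x : EuclideanSpace ℝ (Fin m) := p.rep with hxdef
    have hx : x ≠ 0 := p.rep_nonzero
    set t : ℝ := ∑ i, x i ^ 2 with htdef
    have ht : 0 ≤ t := by positivity
    obtain ⟨y, hy⟩ : ∃ y : EuclideanSpace ℝ (Fin M), ∑ j, y j ^ 2 = t := by
      refine ⟨EuclideanSpace.single (⟨0, hM⟩ : Fin M) (Real.sqrt t), ?_⟩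
      calc ∑ j, (EuclideanSpace.single (⟨0, hM⟩ : Fin M) (Real.sqrt t)) j ^ 2
          = ∑ j : Fin M, (if j = (⟨0, hM⟩ : Fin M) then Real.sqrt t ^ 2 else 0) := by
            apply Finset.sum_congr rfl
            intro j _
            by_cases h : j = (⟨0, hM⟩ : Fin M) <;> simp [EuclideanSpace.single_apply, h]
        _ = Real.sqrt t ^ 2 := by simp
        _ = t := Real.sq_sqrt ht
    have h0 : ((x, y) : EuclideanSpace ℝ (Fin m) × EuclideanSpace ℝ (Fin M)) ≠ 0 := by
      intro h
      exact hx (congrArg Prod.fst h)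
    have hZ : Projectivization.mk ℝ (x, y) h0 ∈
        {p : ℙ ℝ (EuclideanSpace ℝ (Fin m) × EuclideanSpace ℝ (Fin M)) |
          ∑ i, p.rep.1 i ^ 2 = ∑ j, p.rep.2 j ^ 2} :=
      (hmemZ _ _).2 (by rw [hy])
    refine ⟨⟨Projectivization.mk ℝ (x, y) h0, hZ⟩, ?_⟩
    obtain ⟨a, ha⟩ := Projectivization.exists_smul_eq_mk_rep ℝ (x, y) h0
    rw [Units.smul_def] at ha
    have h1 : (Projectivization.mk ℝ (x, y) h0).rep.1 = (a : ℝ) • x := by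
      rw [← ha, Prod.smul_fst]
    show Projectivization.mk ℝ (Projectivization.mk ℝ (x, y) h0).rep.1 _ = p
    calc Projectivization.mk ℝ (Projectivization.mk ℝ (x, y) h0).rep.1
          (hrep1 ⟨Projectivization.mk ℝ (x, y) h0, hZ⟩)
        = Projectivization.mk ℝ p.rep p.rep_nonzero :=
          (Projectivization.mk_eq_mk_iff ℝ _ _ _ _).2
            ⟨a, by rw [Units.smul_def]; exact h1.symm⟩
      _ = p := Projectivization.mk_rep p
  · -- fibers
    intro p
    exact fiber_homeo _ (fun q => Iff.rfl) hrep1 _ (fun q => rfl) p
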